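/- arXiv:1309.3837 — 6 statements merged into one kernel-verified Lean document; each statement's English description precedes it below -/
import Mathlib

section
/- Let α ∈ [0, π/2], and set t₁ = t₂ = arccos(1/(sin(α/2) + cos(α/2))) and δt = arccos(cos(α/2) - sin(α/2)). Then exp(α Ωx) = exp(t₂ Ωz) * exp(-δt Ωy) * exp(-δt Ωz) * exp(t₁ Ωy). -/
open Real Matrix

noncomputable section

def Ox : Matrix (Fin 3) (Fin 3) ℝ := !![0,0,0; 0,0,-1; 0,1,0]
def Oy : Matrix (Fin 3) (Fin 3) ℝ := !![0,0,1; 0,0,0; -1,0,0]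
def Oz : Matrix (Fin 3) (Fin 3) ℝ := !![0,-1,0; 1,0,0; 0,0,0]

open Nat

set_option maxHeartbeats 2000000

lemma odd_pow {A : Matrix (Fin 3) (Fin 3) ℝ} (h : A ^ 3 = -A) (n : ℕ) :
    A ^ (2 * n + 1) = ((-1 : ℝ) ^ n) • A := by
  induction n with
  | zero => simp
  | succ k ih =>
    have h3 : A * A ^ 2 = A ^ 3 := by noncomm_ring
    rw [show 2 * (k + 1) + 1 = (2 * k + 1) + 2 by ring, pow_add, ih, smul_mul_assoc, h3, h,
      pow_succ, smul_neg, mul_neg_one, neg_smul]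

lemma even_pow {A : Matrix (Fin 3) (Fin 3) ℝ} (h : A ^ 3 = -A) (n : ℕ) :
    A ^ (2 * n + 2) = ((-1 : ℝ) ^ n) • A ^ 2 := by
  rw [show 2 * n + 2 = (2 * n + 1) + 1 by ring, pow_succ, odd_pow h, smul_mul_assoc, ← pow_two]

lemma exp_cube (A : Matrix (Fin 3) (Fin 3) ℝ) (h : A ^ 3 = -A) (θ : ℝ) :
    NormedSpace.exp (θ • A) = 1 + Real.sin θ • A + (1 - Real.cos θ) • A ^ 2 := by
  rw [NormedSpace.exp_eq_tsum (𝕂 := ℝ)]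
  have hodd : HasSum (fun n : ℕ => (((2 * n + 1)! : ℝ)⁻¹) • (θ • A) ^ (2 * n + 1))
      (Real.sin θ • A) := by
    convert (Real.hasSum_sin θ).smul_const A using 2 with n
    rw [smul_pow, odd_pow h, smul_smul, smul_smul]
    congr 1
    ring
  have hcos1 : HasSum (fun n : ℕ => (-1 : ℝ) ^ (n + 1) * θ ^ (2 * (n + 1)) / ((2 * (n + 1))! : ℝ))
      (Real.cos θ - 1) := by
    rw [hasSum_nat_add_iff (f := fun n : ℕ => (-1 : ℝ) ^ n * θ ^ (2 * n) / ((2 * n)! : ℝ)) 1]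
    simpa using Real.hasSum_cos θ
  have htail : HasSum (fun n : ℕ => (((2 * (n + 1))! : ℝ)⁻¹) • (θ • A) ^ (2 * (n + 1)))
      ((1 - Real.cos θ) • A ^ 2) := by
    have := (hcos1.neg).smul_const (A ^ 2)
    convert this using 2 with n
    · rw [show 2 * (n + 1) = 2 * n + 2 by ring, smul_pow, even_pow h, smul_smul, smul_smul]
      congr 1
      rw [show 2 * n + 2 = 2 * (n + 1) by ring]
      ring
    · rw [neg_sub]
  have heven : HasSum (fun n : ℕ => (((2 * n)! : ℝ)⁻¹) • (θ • A) ^ (2 * n))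
      ((1 - Real.cos θ) • A ^ 2 + 1) := by
    have := (hasSum_nat_add_iff
      (f := fun n : ℕ => (((2 * n)! : ℝ)⁻¹) • (θ • A) ^ (2 * n)) 1).mp
      (by exact htail)
    simpa using this
  rw [show (1 + Real.sin θ • A + (1 - Real.cos θ) • A ^ 2) = ((1 - Real.cos θ) • A ^ 2 + 1 + Real.sin θ • A) from by abel]
  exact HasSum.tsum_eq (HasSum.even_add_odd (f := fun n : ℕ => ((n ! : ℝ)⁻¹) • (θ • A) ^ n) heven hodd)

lemma Ox_cube : Ox ^ 3 = -Ox := by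
  ext i j; fin_cases i <;> fin_cases j <;>
    simp [Ox, pow_succ, Matrix.mul_apply, Fin.sum_univ_succ, Matrix.vecHead, Matrix.vecTail]

lemma exp_Ox (θ : ℝ) : NormedSpace.exp (θ • Ox) =
    !![1,0,0; 0,Real.cos θ,-Real.sin θ; 0,Real.sin θ,Real.cos θ] := by
  rw [exp_cube Ox Ox_cube]
  ext i j; fin_cases i <;> fin_cases j <;>
    simp [Ox, pow_two, Matrix.mul_apply, Fin.sum_univ_succ, Matrix.one_apply, Matrix.vecHead, Matrix.vecTail]

lemma Oy_cube : Oy ^ 3 = -Oy := by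
  ext i j; fin_cases i <;> fin_cases j <;>
    simp [Oy, pow_succ, Matrix.mul_apply, Fin.sum_univ_succ, Matrix.vecHead, Matrix.vecTail]

lemma exp_Oy (θ : ℝ) : NormedSpace.exp (θ • Oy) =
    !![Real.cos θ,0,Real.sin θ; 0,1,0; -Real.sin θ,0,Real.cos θ] := by
  rw [exp_cube Oy Oy_cube]
  ext i j; fin_cases i <;> fin_cases j <;>
    simp [Oy, pow_two, Matrix.mul_apply, Fin.sum_univ_succ, Matrix.one_apply, Matrix.vecHead, Matrix.vecTail]

lemma Oz_cube : Oz ^ 3 = -Oz := by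
  ext i j; fin_cases i <;> fin_cases j <;>
    simp [Oz, pow_succ, Matrix.mul_apply, Fin.sum_univ_succ, Matrix.vecHead, Matrix.vecTail]

lemma exp_Oz (θ : ℝ) : NormedSpace.exp (θ • Oz) =
    !![Real.cos θ,-Real.sin θ,0; Real.sin θ,Real.cos θ,0; 0,0,1] := by
  rw [exp_cube Oz Oz_cube]
  ext i j; fin_cases i <;> fin_cases j <;>
    simp [Oz, pow_two, Matrix.mul_apply, Fin.sum_univ_succ, Matrix.one_apply, Matrix.vecHead, Matrix.vecTail]

theorem stmt_4 (α t₁ t₂ δt : ℝ) (hα : α ∈ Set.Icc 0 (π / 2))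
    (ht₁ : t₁ = Real.arccos (1 / (Real.sin (α / 2) + Real.cos (α / 2))))
    (ht₂ : t₂ = Real.arccos (1 / (Real.sin (α / 2) + Real.cos (α / 2))))
    (hδt : δt = Real.arccos (Real.cos (α / 2) - Real.sin (α / 2))) :
    NormedSpace.exp (α • Ox) =
      NormedSpace.exp (t₂ • Oz) * NormedSpace.exp ((-δt) • Oy) *
        NormedSpace.exp ((-δt) • Oz) * NormedSpace.exp (t₁ • Oy) := by
  obtain ⟨hα0, hα1⟩ := hα
  have hpi := Real.pi_pos
  set u := Real.sin (α / 2) with hu_def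
  set v := Real.cos (α / 2) with hv_def
  have hu0 : 0 ≤ u := Real.sin_nonneg_of_nonneg_of_le_pi (by linarith) (by linarith)
  have hu1 : u ≤ 1 := Real.sin_le_one _
  have hv0 : 0 < v := Real.cos_pos_of_mem_Ioo ⟨by linarith, by linarith⟩
  have hv1 : v ≤ 1 := Real.cos_le_one _
  have huv : u ^ 2 + v ^ 2 = 1 := Real.sin_sq_add_cos_sq _
  have hp1 : 1 ≤ u + v := by nlinarith [mul_nonneg hu0 hv0.le]
  have hp0 : u + v ≠ 0 := by linarith
  set w := Real.sqrt (2 * u * v) with hw_def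
  have hw0 : 0 ≤ w := Real.sqrt_nonneg _
  have hw : w ^ 2 = 2 * u * v := Real.sq_sqrt (by positivity)
  have hct : Real.cos t₁ = 1 / (u + v) := by
    rw [ht₁]
    exact Real.cos_arccos (by rw [le_div_iff₀ (by linarith)]; linarith)
      (by rw [div_le_one (by linarith)]; linarith)
  have hst : Real.sin t₁ = w / (u + v) := by
    rw [ht₁, Real.sin_arccos, show 1 - (1 / (u + v)) ^ 2 = 2 * u * v / (u + v) ^ 2 by
      field_simp; linear_combination huv, Real.sqrt_div (by positivity),
      Real.sqrt_sq (by linarith)]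
  have hcd : Real.cos δt = v - u := by
    rw [hδt]; exact Real.cos_arccos (by linarith) (by linarith)
  have hsd : Real.sin δt = w := by
    rw [hδt, Real.sin_arccos]
    congr 1
    linear_combination -huv
  have hca : Real.cos α = v ^ 2 - u ^ 2 := by
    have h := Real.cos_sq (α / 2)
    rw [show 2 * (α / 2) = α by ring] at h
    rw [← hv_def] at h
    linarith [huv]
  have hsa : Real.sin α = 2 * u * v := by
    have := Real.sin_two_mul (α / 2)
    rw [show 2 * (α / 2) = α by ring] at this
    rw [this]
  have hct2 : Real.cos t₂ = 1 / (u + v) := by rw [ht₂, ← ht₁, hct]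
  have hst2 : Real.sin t₂ = w / (u + v) := by rw [ht₂, ← ht₁, hst]
  rw [exp_Ox, exp_Oy, exp_Oy, exp_Oz, exp_Oz, hca, hsa, hct, hst, hct2, hst2,
    Real.cos_neg, Real.sin_neg, hcd, hsd]
  rw [Matrix.mul_fin_three, Matrix.mul_fin_three, Matrix.mul_fin_three]
  ext i j
  fin_cases i <;> fin_cases j <;> (try simp [Matrix.vecHead, Matrix.vecTail]) <;> (try field_simp)
  · linear_combination (-2 : ℝ) * hw
  · ring
  · linear_combination (-w) * hw + (-w) * huv
  · linear_combination (-w) * hw + (-w) * huv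
  · linear_combination (u - v) * hw + (v - u) * huv
  · linear_combination (2 - (v - u) ^ 2) * hw + (-4 * u * v) * huv
  · ring
  · linear_combination -hw
  · linear_combination (u - v) * hw + (v - u) * huv
end
end

section
/- Define f(α) = 2·(arccos(1/(sin(α/2)+cos(α/2))) + arccos(cos(α/2)-sin(α/2))) for α ∈ [0, π/2]. Then f(α) ≤ π + α, with strict inequality for α ∈ (0, π/2). -/
open Real

noncomputable def f (α : ℝ) : ℝ :=
  2 * (Real.arccos (1 / (Real.sin (α / 2) + Real.cos (α / 2))) +
    Real.arccos (Real.cos (α / 2) - Real.sin (α / 2)))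

set_option maxHeartbeats 1000000 in
theorem stmt_6 (α : ℝ) (hα : α ∈ Set.Icc 0 (π / 2)) :
    f α ≤ π + α ∧ (α ∈ Set.Ioo 0 (π / 2) → f α < π + α) := by
  obtain ⟨h0, h1⟩ := hα
  have hpi := Real.pi_pos
  set t := α / 2 with ht
  set s := Real.sin t with hs
  set c := Real.cos t with hc
  have ht0 : 0 ≤ t := by positivity
  have htle : t ≤ π / 4 := by rw [ht]; linarith
  have hs0 : 0 ≤ s := Real.sin_nonneg_of_nonneg_of_le_pi ht0 (by linarith)
  have hc0 : 0 < c := Real.cos_pos_of_mem_Ioo ⟨by linarith, by linarith⟩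
  have hsq : s ^ 2 + c ^ 2 = 1 := Real.sin_sq_add_cos_sq t
  have hslec : s ≤ c := by
    have h := (Real.strictMonoOn_sin.monotoneOn) (a := t) (b := π / 2 - t)
      ⟨by linarith, by linarith⟩ ⟨by linarith, by linarith⟩ (by linarith)
    rwa [Real.sin_pi_div_two_sub] at h
  have hc1 : c ≤ 1 := Real.cos_le_one t
  have hu0 : 0 < s + c := by linarith
  have hu1 : 1 ≤ s + c := by nlinarith [mul_nonneg hs0 hc0.le]
  have hx1 : 1 / (s + c) ≤ 1 := by
    rw [div_le_one hu0]; linarith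
  have hx0 : 0 < 1 / (s + c) := by positivity
  have hy0 : 0 ≤ c - s := by linarith
  have hy1 : c - s ≤ 1 := by nlinarith [mul_nonneg hs0 hc0.le]
  set A := Real.arccos (1 / (s + c)) with hA
  set B := Real.arccos (c - s) with hB
  have hA0 : 0 ≤ A := Real.arccos_nonneg _
  have hB0 : 0 ≤ B := Real.arccos_nonneg _
  have hAle : A ≤ π / 2 := by
    rw [hA, Real.arccos_le_pi_div_two]; exact hx0.le
  have hBle : B ≤ π / 2 := by
    rw [hB, Real.arccos_le_pi_div_two]; exact hy0
  -- compute cos (A + B)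
  have hprod : Real.sqrt (1 - (1 / (s + c)) ^ 2) * Real.sqrt (1 - (c - s) ^ 2)
      = 2 * s * c / (s + c) := by
    rw [← Real.sqrt_mul (by nlinarith : (0:ℝ) ≤ 1 - (1 / (s + c)) ^ 2)]
    have : (1 - (1 / (s + c)) ^ 2) * (1 - (c - s) ^ 2) = (2 * s * c / (s + c)) ^ 2 := by
      field_simp
      nlinarith [sq_nonneg (s + c), hsq]
    rw [this, Real.sqrt_sq (by positivity)]
  have hcosAB : Real.cos (A + B) = (c - s - 2 * s * c) / (s + c) := by
    rw [Real.cos_add, hA, hB, Real.cos_arccos (by linarith) hx1,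
      Real.cos_arccos (by linarith) hy1, Real.sin_arccos, Real.sin_arccos, hprod]
    field_simp
  have hcosR : Real.cos (π / 2 + t) = -s := by
    rw [Real.cos_add, Real.cos_pi_div_two, Real.sin_pi_div_two]; ring
  have hmemAB : A + B ∈ Set.Icc 0 π := ⟨by linarith, by linarith⟩
  have hmemR : π / 2 + t ∈ Set.Icc 0 π := ⟨by linarith, by linarith⟩
  constructor
  · have hkey : Real.cos (π / 2 + t) ≤ Real.cos (A + B) := by
      rw [hcosAB, hcosR, le_div_iff₀ hu0]
      have hp : 0 ≤ (c - s) * (1 - s) :=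
        mul_nonneg (sub_nonneg.2 hslec) (sub_nonneg.2 (hslec.trans hc1))
      have hid : c - s - 2 * s * c - -s * (s + c) = (c - s) * (1 - s) := by ring
      linarith [hp, hid]
    have := (Real.strictAntiOn_cos.le_iff_ge hmemR hmemAB).1 hkey
    have hfα : f α = 2 * (A + B) := rfl
    rw [hfα]; rw [ht] at this; linarith
  · rintro ⟨hα0, hα1⟩
    have hsltc : s < c := by
      have h := Real.strictMonoOn_sin (a := t) (b := π / 2 - t)
        ⟨by linarith, by linarith⟩ ⟨by linarith, by linarith⟩ (by rw [ht]; linarith)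
      rwa [Real.sin_pi_div_two_sub] at h
    have hs1 : s < 1 := by linarith
    have hkey : Real.cos (π / 2 + t) < Real.cos (A + B) := by
      rw [hcosAB, hcosR, lt_div_iff₀ hu0]
      have hp : 0 < (c - s) * (1 - s) := mul_pos (sub_pos.2 hsltc) (sub_pos.2 hs1)
      have hid : c - s - 2 * s * c - -s * (s + c) = (c - s) * (1 - s) := by ring
      linarith [hp, hid]
    have := (Real.strictAntiOn_cos.lt_iff_gt hmemR hmemAB).1 hkey
    have hfα : f α = 2 * (A + B) := rfl
    rw [hfα]; rw [ht] at this; linarith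
end

section
/- For α ∈ [0, π/2], with t₁ = arccos(1/(sin(α/2)+cos(α/2))) and δt = arccos(cos(α/2)-sin(α/2)), one has cos²t₁ · cos²δt + sin²t₁ = 1/(sin(α/2)+cos(α/2))², i.e. the closing rotation angle t₂ equals t₁. -/
open Real

theorem stmt_10 (α t₁ δt : ℝ) (hα : α ∈ Set.Icc 0 (π / 2))
    (ht₁ : t₁ = Real.arccos (1 / (Real.sin (α / 2) + Real.cos (α / 2))))
    (hδt : δt = Real.arccos (Real.cos (α / 2) - Real.sin (α / 2))) :
    Real.cos t₁ ^ 2 * Real.cos δt ^ 2 + Real.sin t₁ ^ 2 =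
      (1 / (Real.sin (α / 2) + Real.cos (α / 2))) ^ 2 := by
  obtain ⟨h0, h1⟩ := hα
  set x := α / 2 with hx
  have hx0 : 0 ≤ x := by positivity
  have hx1 : x ≤ π / 4 := by
    rw [hx]; linarith
  have hs0 : 0 ≤ Real.sin x := Real.sin_nonneg_of_nonneg_of_le_pi hx0 (by linarith [Real.pi_pos])
  have hc0 : 0 < Real.cos x := Real.cos_pos_of_mem_Ioo ⟨by linarith [Real.pi_pos], by linarith [Real.pi_pos]⟩
  have hc1 : Real.cos x ≤ 1 := Real.cos_le_one x
  have hcs : Real.sin x ≤ Real.cos x := by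
    rw [← Real.cos_pi_div_two_sub]
    apply Real.cos_le_cos_of_nonneg_of_le_pi hx0 (by linarith [Real.pi_pos])
    linarith
  have hpyth : Real.sin x ^ 2 + Real.cos x ^ 2 = 1 := Real.sin_sq_add_cos_sq x
  have hsum1 : 1 ≤ Real.sin x + Real.cos x := by
    nlinarith [sq_nonneg (Real.sin x + Real.cos x - 1), mul_nonneg hs0 hc0.le]
  have hsumpos : (0:ℝ) < Real.sin x + Real.cos x := by linarith
  have hinv0 : (0:ℝ) ≤ 1 / (Real.sin x + Real.cos x) := by positivity
  have hinv1 : 1 / (Real.sin x + Real.cos x) ≤ 1 := by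
    rw [div_le_one hsumpos]; exact hsum1
  have hct1 : Real.cos t₁ = 1 / (Real.sin x + Real.cos x) := by
    rw [ht₁, Real.cos_arccos (by linarith) hinv1]
  have hcδ : Real.cos δt = Real.cos x - Real.sin x := by
    rw [hδt, Real.cos_arccos (by linarith) (by linarith)]
  have hst1 : Real.sin t₁ ^ 2 = 1 - Real.cos t₁ ^ 2 := by
    nlinarith [Real.sin_sq_add_cos_sq t₁]
  rw [hst1, hct1, hcδ]
  field_simp
  nlinarith [sq_nonneg (Real.sin x + Real.cos x)]
end

section
/- For every real s, exp(s Ωz) * exp(-s Ωy) * exp(-s Ωz) = exp(-(π - s) Ωz) * exp(s Ωy) * exp((π - s) Ωz). -/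
open Real Matrix

noncomputable section

namespace Stmt11Aux

open NormedSpace

/-- The rotation by π about the z axis. -/
def D : Matrix (Fin 3) (Fin 3) ℝ := !![-1,0,0; 0,-1,0; 0,0,1]

lemma D_mul_D : D * D = 1 := by
  rw [Matrix.one_fin_three]
  norm_num [D, Matrix.mul_fin_three]

/-- `D` as a unit. -/
def Du : (Matrix (Fin 3) (Fin 3) ℝ)ˣ := ⟨D, D, D_mul_D, D_mul_D⟩

/-- The ring hom `ℂ × ℝ → M₃(ℝ)`. -/
def φ : (ℂ × ℝ) →+* Matrix (Fin 3) (Fin 3) ℝ where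
  toFun p := !![p.1.re, -p.1.im, 0; p.1.im, p.1.re, 0; 0, 0, p.2]
  map_one' := by
    rw [Matrix.one_fin_three]
    norm_num
  map_mul' p q := by
    simp only [Prod.fst_mul, Prod.snd_mul, Complex.mul_re, Complex.mul_im,
      Matrix.mul_fin_three]
    congr 1 <;> ring
  map_zero' := by
    ext i j
    fin_cases i <;> fin_cases j <;> simp [Matrix.vecHead, Matrix.vecTail]
  map_add' p q := by
    ext i j
    fin_cases i <;> fin_cases j <;>
      simp [Complex.add_re, Complex.add_im, Matrix.vecHead, Matrix.vecTail] <;> ring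

lemma exp_pi_Oz : NormedSpace.exp (π • Oz) = D := by
  letI : SeminormedRing (Matrix (Fin 3) (Fin 3) ℝ) := Matrix.linftyOpSemiNormedRing
  letI : NormedRing (Matrix (Fin 3) (Fin 3) ℝ) := Matrix.linftyOpNormedRing
  letI : NormedAlgebra ℝ (Matrix (Fin 3) (Fin 3) ℝ) := Matrix.linftyOpNormedAlgebra
  have hcont : Continuous φ := by
    apply continuous_matrix
    intro i j
    fin_cases i <;> fin_cases j <;> simp [φ] <;> fun_prop
  have h1 : π • Oz = φ (π * Complex.I, 0) := by
    ext i j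
    fin_cases i <;> fin_cases j <;> simp [φ, Oz, Matrix.vecHead, Matrix.vecTail]
  rw [h1]
  erw [← map_exp φ hcont]
  have h2 : NormedSpace.exp ((π * Complex.I, (0:ℝ))) = ((-1 : ℂ), (1:ℝ)) := by
    refine Prod.ext ?_ ?_
    · rw [Prod.fst_exp]
      have : (NormedSpace.exp : ℂ → ℂ) = NormedSpace.exp := rfl
      rw [this, ← Complex.exp_eq_exp_ℂ, Complex.exp_pi_mul_I]
    · rw [Prod.snd_exp]
      exact NormedSpace.exp_zero
  rw [h2]
  ext i j
  fin_cases i <;> fin_cases j <;> simp [φ, D, Matrix.vecHead, Matrix.vecTail]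

lemma exp_neg_pi_Oz : NormedSpace.exp ((-π) • Oz) = D := by
  have hc : Commute (π • Oz) ((-π) • Oz) := ((Commute.refl Oz).smul_left π).smul_right (-π)
  have h := Matrix.exp_add_of_commute (π • Oz) ((-π) • Oz) hc
  have h0 : π • Oz + (-π) • Oz = 0 := by rw [← add_smul]; simp
  rw [h0, NormedSpace.exp_zero, exp_pi_Oz] at h
  calc NormedSpace.exp ((-π) • Oz) = D * (D * NormedSpace.exp ((-π) • Oz)) := by
        rw [← mul_assoc, D_mul_D, one_mul]
    _ = D := by rw [← h, mul_one]
lemma conj_exp (t : ℝ) : NormedSpace.exp ((-t) • Oy) = D * NormedSpace.exp (t • Oy) * D := by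
  have hC : (Du : Matrix (Fin 3) (Fin 3) ℝ) * (t • Oy) * ((Du⁻¹ : (Matrix (Fin 3) (Fin 3) ℝ)ˣ) : Matrix (Fin 3) (Fin 3) ℝ) = (-t) • Oy := by
    show D * (t • Oy) * D = (-t) • Oy
    ext i j
    fin_cases i <;> fin_cases j <;>
      simp [D, Oy, Matrix.mul_apply, Fin.sum_univ_three, Matrix.vecHead, Matrix.vecTail]
  have h := Matrix.exp_units_conj Du (t • Oy)
  rw [hC] at h
  exact h

end Stmt11Aux

theorem stmt_11 (s : ℝ) :
    NormedSpace.exp (s • Oz) * NormedSpace.exp ((-s) • Oy) *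
      NormedSpace.exp ((-s) • Oz) =
    NormedSpace.exp ((-(π - s)) • Oz) * NormedSpace.exp (s • Oy) *
      NormedSpace.exp ((π - s) • Oz) := by
  open Stmt11Aux NormedSpace in
  have e1 : NormedSpace.exp ((-(π - s)) • Oz) = NormedSpace.exp (s • Oz) * D := by
    have h : (-(π - s)) • Oz = s • Oz + (-π) • Oz := by
      rw [← add_smul]; ring_nf
    rw [h, Matrix.exp_add_of_commute _ _ (((Commute.refl Oz).smul_left s).smul_right (-π)),
      exp_neg_pi_Oz]
  have e2 : NormedSpace.exp ((π - s) • Oz) = D * NormedSpace.exp ((-s) • Oz) := by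
    have h : (π - s) • Oz = π • Oz + (-s) • Oz := by
      rw [← add_smul]; ring_nf
    rw [h, Matrix.exp_add_of_commute _ _ (((Commute.refl Oz).smul_left π).smul_right (-s)),
      exp_pi_Oz]
  rw [e1, e2, Stmt11Aux.conj_exp s]
  simp only [mul_assoc]
end
end

section
/- For every real t, exp(t Ωy) * exp(-(π/2) Ωx) = exp((t - π/2) Ωy) * exp((π/2) Ωz) * exp((π/2) Ωy). -/
open Real Matrix

noncomputable section

lemma exp_form (A : Matrix (Fin 3) (Fin 3) ℝ) (h3 : A * A * A = -A) (s : ℝ) :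
    NormedSpace.exp (s • A) = 1 + Real.sin s • A + (1 - Real.cos s) • (A * A) := by
  have hodd : ∀ k : ℕ, A ^ (2 * k + 1) = ((-1 : ℝ) ^ k) • A := by
    intro k
    induction k with
    | zero => simp
    | succ n ih =>
      have h : 2 * (n + 1) + 1 = (2 * n + 1) + 2 := by ring
      rw [h, pow_add, ih, sq, smul_mul_assoc, ← mul_assoc, h3]
      simp [pow_succ]
  have heven : ∀ k : ℕ, A ^ (2 * k + 2) = ((-1 : ℝ) ^ k) • (A * A) := by
    intro k
    have h : 2 * k + 2 = (2 * k + 1) + 1 := by ring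
    rw [h, pow_succ, hodd, smul_mul_assoc]
  rw [NormedSpace.exp_eq_tsum (𝕂 := ℝ)]
  refine HasSum.tsum_eq ?_
  have hevenS : HasSum (fun k : ℕ => (((2 * k).factorial : ℝ))⁻¹ • (s • A) ^ (2 * k))
      (Real.cos s • (-(A * A)) + (1 + A * A)) := by
    have hcos := (Real.hasSum_cos s).smul_const (-(A * A))
    have hone : HasSum (fun k : ℕ => if k = 0 then (1 : Matrix (Fin 3) (Fin 3) ℝ) + A * A else 0)
        (1 + A * A) := hasSum_ite_eq 0 _
    refine (hcos.add hone).congr_fun ?_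
    intro k
    cases k with
    | zero => simp
    | succ n =>
      have h : 2 * (n + 1) = 2 * n + 2 := by ring
      rw [if_neg n.succ_ne_zero, add_zero, smul_pow, h, heven, smul_smul, smul_smul,
        smul_neg, ← neg_smul, pow_succ]
      congr 1
      ring
  have hoddS : HasSum (fun k : ℕ => (((2 * k + 1).factorial : ℝ))⁻¹ • (s • A) ^ (2 * k + 1))
      (Real.sin s • A) := by
    refine ((Real.hasSum_sin s).smul_const A).congr_fun ?_
    intro k
    rw [smul_pow, hodd, smul_smul, smul_smul]
    congr 1
    ring
  have htot := HasSum.even_add_odd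
    (f := fun n : ℕ => ((n.factorial : ℝ))⁻¹ • (s • A) ^ n) hevenS hoddS
  convert htot using 1
  · rfl
  rw [sub_smul, one_smul, smul_neg]
  abel


lemma hx3 : Ox * Ox * Ox = -Ox := by
  ext i j; fin_cases i <;> fin_cases j <;>
    simp [Ox, Matrix.mul_apply, Fin.sum_univ_succ, Matrix.vecHead, Matrix.vecTail]

lemma hy3 : Oy * Oy * Oy = -Oy := by
  ext i j; fin_cases i <;> fin_cases j <;>
    simp [Oy, Matrix.mul_apply, Fin.sum_univ_succ, Matrix.vecHead, Matrix.vecTail]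

lemma hz3 : Oz * Oz * Oz = -Oz := by
  ext i j; fin_cases i <;> fin_cases j <;>
    simp [Oz, Matrix.mul_apply, Fin.sum_univ_succ, Matrix.vecHead, Matrix.vecTail]

lemma m1 : (1 : Matrix (Fin 3) (Fin 3) ℝ) - Ox + Ox * Ox = !![1,0,0; 0,0,1; 0,-1,0] := by
  ext i j; fin_cases i <;> fin_cases j <;>
    simp [Ox, Matrix.mul_apply, Matrix.one_apply, Fin.sum_univ_succ,
      Matrix.vecHead, Matrix.vecTail]

lemma m2 : (1 : Matrix (Fin 3) (Fin 3) ℝ) + Oz + Oz * Oz = !![0,-1,0; 1,0,0; 0,0,1] := by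
  ext i j; fin_cases i <;> fin_cases j <;>
    simp [Oz, Matrix.mul_apply, Matrix.one_apply, Fin.sum_univ_succ,
      Matrix.vecHead, Matrix.vecTail]

lemma m3 : (1 : Matrix (Fin 3) (Fin 3) ℝ) + Oy + Oy * Oy = !![0,0,1; 0,1,0; -1,0,0] := by
  ext i j; fin_cases i <;> fin_cases j <;>
    simp [Oy, Matrix.mul_apply, Matrix.one_apply, Fin.sum_univ_succ,
      Matrix.vecHead, Matrix.vecTail]

lemma m4 : (1 : Matrix (Fin 3) (Fin 3) ℝ) - Oy + Oy * Oy = !![0,0,-1; 0,1,0; 1,0,0] := by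
  ext i j; fin_cases i <;> fin_cases j <;>
    simp [Oy, Matrix.mul_apply, Matrix.one_apply, Fin.sum_univ_succ,
      Matrix.vecHead, Matrix.vecTail]

lemma mprod : (!![0,0,-1; 0,1,0; 1,0,0] : Matrix (Fin 3) (Fin 3) ℝ) *
    (!![0,-1,0; 1,0,0; 0,0,1] * !![0,0,1; 0,1,0; -1,0,0]) = !![1,0,0; 0,0,1; 0,-1,0] := by
  ext i j; fin_cases i <;> fin_cases j <;>
    simp [Matrix.mul_apply, Fin.sum_univ_succ, Matrix.vecHead, Matrix.vecTail]

lemma e1 : NormedSpace.exp ((-(π / 2)) • Ox) = !![1,0,0; 0,0,1; 0,-1,0] := by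
  rw [exp_form Ox hx3, Real.sin_neg, Real.cos_neg, Real.sin_pi_div_two, Real.cos_pi_div_two,
    neg_one_smul, sub_zero, one_smul, ← m1]
  abel

lemma e2 : NormedSpace.exp ((π / 2) • Oz) = !![0,-1,0; 1,0,0; 0,0,1] := by
  rw [exp_form Oz hz3, Real.sin_pi_div_two, Real.cos_pi_div_two, sub_zero, one_smul, one_smul,
    ← m2]

lemma e3 : NormedSpace.exp ((π / 2) • Oy) = !![0,0,1; 0,1,0; -1,0,0] := by
  rw [exp_form Oy hy3, Real.sin_pi_div_two, Real.cos_pi_div_two, sub_zero, one_smul, one_smul,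
    ← m3]

lemma e4 : NormedSpace.exp ((-(π / 2)) • Oy) = !![0,0,-1; 0,1,0; 1,0,0] := by
  rw [exp_form Oy hy3, Real.sin_neg, Real.cos_neg, Real.sin_pi_div_two, Real.cos_pi_div_two,
    neg_one_smul, sub_zero, one_smul, ← m4]
  abel

theorem stmt_13 (t : ℝ) :
    NormedSpace.exp (t • Oy) * NormedSpace.exp ((-(π / 2)) • Ox) =
      NormedSpace.exp ((t - π / 2) • Oy) * NormedSpace.exp ((π / 2) • Oz) *
        NormedSpace.exp ((π / 2) • Oy) := by
  have hsplit : (t - π / 2) • Oy = t • Oy + (-(π / 2)) • Oy := by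
    rw [← add_smul]; ring_nf
  have hcomm : Commute (t • Oy) ((-(π / 2)) • Oy) :=
    ((Commute.refl Oy).smul_left t).smul_right _
  rw [hsplit, Matrix.exp_add_of_commute _ _ hcomm, e1, e2, e3, e4, mul_assoc, mul_assoc, mprod]
end
end

section
/- Define f(α) = 2·(arccos(1/(sin(α/2)+cos(α/2))) + arccos(cos(α/2)-sin(α/2))). Then f is strictly monotone increasing on [0, π/2]. -/
open Real

theorem stmt_18 : StrictMonoOn f (Set.Icc 0 (π / 2)) := by
  have hpi : (0:ℝ) < π := Real.pi_pos
  -- key identity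
  have hs2 : Real.sqrt 2 * Real.sqrt 2 = 2 := Real.mul_self_sqrt (by norm_num)
  have key : ∀ θ : ℝ, Real.sin θ + Real.cos θ = Real.sqrt 2 * Real.sin (θ + π / 4) := by
    intro θ
    rw [Real.sin_add, Real.cos_pi_div_four, Real.sin_pi_div_four]
    linear_combination (-(Real.sin θ + Real.cos θ) / 2) * hs2
  -- sum bound
  have sum_ge : ∀ θ : ℝ, 0 ≤ θ → θ ≤ π / 4 → 1 ≤ Real.sin θ + Real.cos θ := by
    intro θ h0 h1
    have hs : 0 ≤ Real.sin θ := Real.sin_nonneg_of_nonneg_of_le_pi h0 (by linarith)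
    have hc : 0 ≤ Real.cos θ := Real.cos_nonneg_of_mem_Icc ⟨by linarith, by linarith⟩
    nlinarith [Real.sin_sq_add_cos_sq θ, mul_nonneg hs hc]
  intro x hx y hy hxy
  obtain ⟨hx0, hx1⟩ := hx
  obtain ⟨hy0, hy1⟩ := hy
  set a := x / 2 with ha
  set b := y / 2 with hb
  have ha0 : 0 ≤ a := by simp [ha]; linarith
  have ha1 : a ≤ π / 4 := by simp [ha]; linarith
  have hb0 : 0 ≤ b := by simp [hb]; linarith
  have hb1 : b ≤ π / 4 := by simp [hb]; linarith
  have hab : a < b := by simp [ha, hb]; linarith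
  -- sums
  have hSa : 1 ≤ Real.sin a + Real.cos a := sum_ge a ha0 ha1
  have hSb : 1 ≤ Real.sin b + Real.cos b := sum_ge b hb0 hb1
  have hsum_lt : Real.sin a + Real.cos a < Real.sin b + Real.cos b := by
    rw [key a, key b]
    have h2 : (0:ℝ) < Real.sqrt 2 := Real.sqrt_pos.2 (by norm_num)
    refine mul_lt_mul_of_pos_left ?_ h2
    apply Real.strictMonoOn_sin
    · constructor <;> [linarith; linarith]
    · constructor <;> [linarith; linarith]
    · linarith
  -- first arccos term
  have hA : Real.arccos (1 / (Real.sin a + Real.cos a)) <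
      Real.arccos (1 / (Real.sin b + Real.cos b)) := by
    apply Real.strictAntiOn_arccos
    · constructor
      · have : (0:ℝ) < 1 / (Real.sin b + Real.cos b) := by positivity
        linarith
      · rw [div_le_one (by linarith)]; linarith
    · constructor
      · have : (0:ℝ) < 1 / (Real.sin a + Real.cos a) := by positivity
        linarith
      · rw [div_le_one (by linarith)]; linarith
    · rw [div_lt_div_iff₀ (by linarith) (by linarith)]; linarith
  -- second arccos term
  have hcb : Real.cos b < Real.cos a := by
    apply Real.strictAntiOn_cos ⟨ha0, by linarith⟩ ⟨hb0, by linarith⟩ hab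
  have hsb : Real.sin a < Real.sin b := by
    apply Real.strictMonoOn_sin ⟨by linarith, by linarith⟩ ⟨by linarith, by linarith⟩ hab
  have hcos_a : 0 ≤ Real.cos a := Real.cos_nonneg_of_mem_Icc ⟨by linarith, by linarith⟩
  have hcos_b : 0 ≤ Real.cos b := Real.cos_nonneg_of_mem_Icc ⟨by linarith, by linarith⟩
  have hsin_a : 0 ≤ Real.sin a := Real.sin_nonneg_of_nonneg_of_le_pi ha0 (by linarith)
  have hsin_b : 0 ≤ Real.sin b := Real.sin_nonneg_of_nonneg_of_le_pi hb0 (by linarith)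
  have hB : Real.arccos (Real.cos a - Real.sin a) <
      Real.arccos (Real.cos b - Real.sin b) := by
    apply Real.strictAntiOn_arccos
    · constructor
      · have := Real.sin_le_one b
        linarith
      · have := Real.cos_le_one b
        linarith
    · constructor
      · have := Real.sin_le_one a
        linarith
      · have := Real.cos_le_one a
        linarith
    · linarith
  show 2 * (Real.arccos (1 / (Real.sin (x/2) + Real.cos (x/2))) +
    Real.arccos (Real.cos (x/2) - Real.sin (x/2))) <
    2 * (Real.arccos (1 / (Real.sin (y/2) + Real.cos (y/2))) +
    Real.arccos (Real.cos (y/2) - Real.sin (y/2)))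
  rw [← ha, ← hb]
  linarith
end
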